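/- Fix h, w ∈ ℕ. For each pixel (i,j) with 1 ≤ i ≤ h, 1 ≤ j ≤ w, let α_{ij}, β_{ij} > 0, μ_{s,ij} ∈ ℝ, σ_{s,ij} > 0, and set μ_{ω,ij} = α_{ij}/β_{ij} and E_{ij}[log ω] = ∫_{(0,∞)} log ω dGamma(α_{ij}, β_{ij})(ω). Then Σ_{i,j} ∫_{(0,∞)} KL(N(μ_{s,ij}, σ_{s,ij}²) ‖ N(0, ω^{-1})) dGamma(α_{ij}, β_{ij})(ω) = (1/2) Σ_{i,j} [ μ_{ω,ij}·(μ_{s,ij}² + σ_{s,ij}²) − log σ_{s,ij}² − 1 − E_{ij}[log ω] ]. In particular, this expectation equals the sparsity loss term ℓ_sparse of the paper's Eq. (29) up to an additive constant that does not depend on the Gaussian parameters μ_S, σ_S. -/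

import Mathlib

open MeasureTheory ProbabilityTheory
open scoped ENNReal NNReal

/- Kullback–Leibler divergence `KL(q‖p)`, valued in `[0,∞]`:
`∫ log (dq/dp) dq` if `q ≪ p` and the log-density is `q`-integrable, and `+∞` otherwise. -/
open Classical in
noncomputable def klDiv {Ω : Type*} [MeasurableSpace Ω] (q p : Measure Ω) : ℝ≥0∞ :=
  if q ≪ p ∧ Integrable (llr q p) q then ENNReal.ofReal (∫ x, llr q p x ∂q) else ⊤

/- `KL(N(μ, σ²) ‖ N(0, ω⁻¹))` as a real number, where `N` is the real Gaussian measure. -/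
noncomputable def gaussKL (μ σ ω : ℝ) : ℝ :=
  (klDiv (gaussianReal μ (Real.toNNReal (σ ^ 2))) (gaussianReal 0 (Real.toNNReal ω⁻¹))).toReal

open Real Set


section Aux

lemma integrable_sq_mul_exp_neg_mul_sq {b : ℝ} (hb : 0 < b) :
    Integrable (fun x : ℝ => x ^ 2 * rexp (-b * x ^ 2)) := by
  have := integrable_rpow_mul_exp_neg_mul_sq hb (s := 2) (by norm_num)
  have h2 : ∀ x : ℝ, x ^ (2:ℝ) = x ^ (2:ℕ) := fun x => by
    rw [show (2:ℝ) = ((2:ℕ):ℝ) by norm_num, Real.rpow_natCast]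
  simpa [h2] using this

lemma integral_mul_exp_neg_mul_sq_eq_zero {b : ℝ} :
    ∫ x : ℝ, x * rexp (-b * x ^ 2) = 0 := by
  have h := MeasureTheory.integral_neg_eq_self (fun x : ℝ => x * rexp (-b * x ^ 2)) volume
  simp only [neg_mul, neg_sq] at h
  have h2 : ∫ x : ℝ, -(x * rexp (-b * x ^ 2)) = ∫ x : ℝ, x * rexp (-b * x ^ 2) := by
    simpa [neg_mul] using h
  rw [integral_neg] at h2
  linarith

lemma integral_sq_mul_exp_neg_mul_sq {b : ℝ} (hb : 0 < b) :
    ∫ x : ℝ, x ^ 2 * rexp (-b * x ^ 2) = Real.sqrt (π / b) / (2 * b) := by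
  have habs : (fun x : ℝ => x ^ 2 * rexp (-b * x ^ 2))
      = fun x : ℝ => |x| ^ 2 * rexp (-b * |x| ^ 2) := by
    ext x; rw [sq_abs]
  rw [habs, integral_comp_abs (f := fun x : ℝ => x ^ 2 * rexp (-b * x ^ 2))]
  have h2 : ∀ x ∈ Ioi (0:ℝ),
      x ^ (2:ℕ) * rexp (-b * x ^ (2:ℕ)) = x ^ (2:ℝ) * rexp (-b * x ^ (2:ℝ)) := by
    intro x hx
    rw [show (2:ℝ) = ((2:ℕ):ℝ) by norm_num, Real.rpow_natCast]
  rw [setIntegral_congr_fun measurableSet_Ioi h2,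
    integral_rpow_mul_exp_neg_mul_rpow (by norm_num) (by norm_num) hb]
  have h32 : (-(2+1)/2 : ℝ) = -(1/2) - 1 := by norm_num
  have hG : Real.Gamma ((2+1)/2 : ℝ) = Real.sqrt π / 2 := by
    rw [show ((2+1)/2 : ℝ) = 1/2 + 1 by norm_num, Real.Gamma_add_one (by norm_num),
      Real.Gamma_one_half_eq]
    ring
  rw [hG, h32, Real.rpow_sub hb, Real.rpow_neg hb.le, Real.rpow_one,
    ← Real.sqrt_eq_rpow, Real.sqrt_div' π hb.le]
  have hsb : (0:ℝ) < √b := Real.sqrt_pos.mpr hb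
  field_simp

end Aux

section Gauss

lemma integral_gaussianReal_eq (μ : ℝ) {v : ℝ≥0} (hv : v ≠ 0) (f : ℝ → ℝ) :
    ∫ x, f x ∂gaussianReal μ v = ∫ x, gaussianPDFReal μ v x * f x := by
  rw [gaussianReal_of_var_ne_zero _ hv]
  have hd : gaussianPDF μ v = fun x => ((gaussianPDFReal μ v x).toNNReal : ℝ≥0∞) := rfl
  rw [hd, integral_withDensity_eq_integral_smul
    ((measurable_gaussianPDFReal μ v).real_toNNReal) f]
  congr 1
  ext x
  rw [NNReal.smul_def, smul_eq_mul, Real.coe_toNNReal _ (gaussianPDFReal_nonneg μ v x)]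

lemma integrable_gaussianReal_iff (μ : ℝ) {v : ℝ≥0} (hv : v ≠ 0) (f : ℝ → ℝ) :
    Integrable f (gaussianReal μ v) ↔
      Integrable (fun x => f x * gaussianPDFReal μ v x) volume := by
  rw [gaussianReal_of_var_ne_zero _ hv,
    integrable_withDensity_iff (measurable_gaussianPDF μ v)
      (ae_of_all _ fun x => ENNReal.ofReal_lt_top)]
  constructor <;> intro h <;> refine h.congr (ae_of_all _ fun x => ?_) <;>
    simp [gaussianPDF, ENNReal.toReal_ofReal (gaussianPDFReal_nonneg μ v x)]

lemma pdf0_eq {v : ℝ≥0} (y : ℝ) :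
    gaussianPDFReal 0 v y = (√(2*π*v))⁻¹ * rexp (-(2*(v:ℝ))⁻¹ * y^2) := by
  rw [gaussianPDFReal]
  congr 1
  rw [Real.exp_eq_exp]
  by_cases hv : (v:ℝ) = 0
  · simp [hv]
  · field_simp
    ring

lemma gaussianPDFReal_shift (μ : ℝ) (v : ℝ≥0) (x : ℝ) :
    gaussianPDFReal μ v x = gaussianPDFReal 0 v (x - μ) := by
  simp [gaussianPDFReal]

lemma integrable_sq_pdf0 {v : ℝ≥0} (hv : 0 < (v:ℝ)) :
    Integrable (fun y : ℝ => gaussianPDFReal 0 v y * y ^ 2) := by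
  have hb : (0:ℝ) < (2*(v:ℝ))⁻¹ := by positivity
  have := (integrable_sq_mul_exp_neg_mul_sq hb).const_mul (√(2*π*v))⁻¹
  refine this.congr (ae_of_all _ fun y => ?_)
  simp only []
  rw [pdf0_eq]; ring

lemma integrable_lin_pdf0 {v : ℝ≥0} (hv : 0 < (v:ℝ)) :
    Integrable (fun y : ℝ => gaussianPDFReal 0 v y * y) := by
  have hb : (0:ℝ) < (2*(v:ℝ))⁻¹ := by positivity
  have := (integrable_mul_exp_neg_mul_sq hb).const_mul (√(2*π*v))⁻¹
  refine this.congr (ae_of_all _ fun y => ?_)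
  simp only []
  rw [pdf0_eq]; ring

lemma integral_sq_pdf0 {v : ℝ≥0} (hv : 0 < (v:ℝ)) :
    ∫ y : ℝ, gaussianPDFReal 0 v y * y ^ 2 = v := by
  have hb : (0:ℝ) < (2*(v:ℝ))⁻¹ := by positivity
  have h1 : ∀ y : ℝ, gaussianPDFReal 0 v y * y ^ 2
      = (√(2*π*v))⁻¹ * (y ^ 2 * rexp (-(2*(v:ℝ))⁻¹ * y ^ 2)) := by
    intro y; rw [pdf0_eq]; ring
  simp_rw [h1]
  rw [integral_const_mul, integral_sq_mul_exp_neg_mul_sq hb]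
  have h2 : π / ((2*(v:ℝ))⁻¹) = 2*π*(v:ℝ) := by field_simp
  rw [h2]
  have hs : (0:ℝ) < √(2*π*(v:ℝ)) := Real.sqrt_pos.mpr (by positivity)
  field_simp

lemma integral_lin_pdf0 {v : ℝ≥0} (hv : 0 < (v:ℝ)) :
    ∫ y : ℝ, gaussianPDFReal 0 v y * y = 0 := by
  have h1 : ∀ y : ℝ, gaussianPDFReal 0 v y * y
      = (√(2*π*v))⁻¹ * (y * rexp (-(2*(v:ℝ))⁻¹ * y ^ 2)) := by
    intro y; rw [pdf0_eq]; ring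
  simp_rw [h1]
  rw [integral_const_mul, integral_mul_exp_neg_mul_sq_eq_zero, mul_zero]

lemma integrable_sq_gauss (μ : ℝ) {v : ℝ≥0} (hv : 0 < (v:ℝ)) :
    Integrable (fun x => (x - μ) ^ 2) (gaussianReal μ v) := by
  have hv' : v ≠ 0 := by exact_mod_cast hv.ne'
  rw [integrable_gaussianReal_iff μ hv']
  have : Integrable (fun y : ℝ => y ^ 2 * gaussianPDFReal 0 v y) :=
    (integrable_sq_pdf0 hv).congr (ae_of_all _ fun y => by ring)
  refine (this.comp_sub_right μ).congr (ae_of_all _ fun x => ?_)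
  simp only [Function.comp]
  conv_rhs => rw [gaussianPDFReal_shift μ v x]

lemma integrable_lin_gauss (μ : ℝ) {v : ℝ≥0} (hv : 0 < (v:ℝ)) :
    Integrable (fun x => x - μ) (gaussianReal μ v) := by
  have hv' : v ≠ 0 := by exact_mod_cast hv.ne'
  rw [integrable_gaussianReal_iff μ hv']
  have : Integrable (fun y : ℝ => y * gaussianPDFReal 0 v y) :=
    (integrable_lin_pdf0 hv).congr (ae_of_all _ fun y => by ring)
  refine (this.comp_sub_right μ).congr (ae_of_all _ fun x => ?_)
  simp only [Function.comp]
  conv_rhs => rw [gaussianPDFReal_shift μ v x]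

lemma integral_sq_gauss (μ : ℝ) {v : ℝ≥0} (hv : 0 < (v:ℝ)) :
    ∫ x, (x - μ) ^ 2 ∂gaussianReal μ v = v := by
  have hv' : v ≠ 0 := by exact_mod_cast hv.ne'
  rw [integral_gaussianReal_eq μ hv']
  have h1 : ∀ x : ℝ, gaussianPDFReal μ v x * (x - μ) ^ 2
      = (fun y => gaussianPDFReal 0 v y * y ^ 2) (x - μ) := by
    intro x; rw [gaussianPDFReal_shift]
  simp_rw [h1]
  rw [integral_sub_right_eq_self (fun y => gaussianPDFReal 0 v y * y ^ 2) μ]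
  exact integral_sq_pdf0 hv

lemma integral_lin_gauss (μ : ℝ) {v : ℝ≥0} (hv : 0 < (v:ℝ)) :
    ∫ x, (x - μ) ∂gaussianReal μ v = 0 := by
  have hv' : v ≠ 0 := by exact_mod_cast hv.ne'
  rw [integral_gaussianReal_eq μ hv']
  have h1 : ∀ x : ℝ, gaussianPDFReal μ v x * (x - μ)
      = (fun y => gaussianPDFReal 0 v y * y) (x - μ) := by
    intro x; rw [gaussianPDFReal_shift]
  simp_rw [h1]
  rw [integral_sub_right_eq_self (fun y => gaussianPDFReal 0 v y * y) μ]
  exact integral_lin_pdf0 hv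

end Gauss


lemma llr_gauss_ae {μ σ ω : ℝ} (hσ : 0 < σ) (hω : 0 < ω) :
    llr (gaussianReal μ (Real.toNNReal (σ ^ 2))) (gaussianReal 0 (Real.toNNReal ω⁻¹))
      =ᵐ[gaussianReal μ (Real.toNNReal (σ ^ 2))]
    fun x => Real.log (gaussianPDFReal μ (Real.toNNReal (σ ^ 2)) x)
      - Real.log (gaussianPDFReal 0 (Real.toNNReal ω⁻¹) x) := by
  set v := Real.toNNReal (σ ^ 2) with hv_def
  set u := Real.toNNReal ω⁻¹ with hu_def
  have hv : v ≠ 0 := by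
    simp only [hv_def, ne_eq, Real.toNNReal_eq_zero, not_le]
    positivity
  have hu : u ≠ 0 := by
    simp only [hu_def, ne_eq, Real.toNNReal_eq_zero, not_le]
    positivity
  have h1 := Measure.rnDeriv_withDensity_right (gaussianReal μ v) volume
    (measurable_gaussianPDF 0 u).aemeasurable
    (ae_of_all _ fun x => (gaussianPDF_pos 0 hu x).ne')
    (ae_of_all _ fun x => by simp [gaussianPDF])
  rw [← gaussianReal_of_var_ne_zero 0 hu] at h1
  have h2 := rnDeriv_gaussianReal μ v
  have hac := gaussianReal_absolutelyContinuous μ hv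
  have h3 : llr (gaussianReal μ v) (gaussianReal 0 u) =ᵐ[volume]
      fun x => Real.log (gaussianPDFReal μ v x) - Real.log (gaussianPDFReal 0 u x) := by
    filter_upwards [h1, h2] with x hx1 hx2
    rw [llr_def]
    simp only []
    rw [hx1, hx2]
    rw [ENNReal.toReal_mul, ENNReal.toReal_inv]
    simp only [gaussianPDF]
    rw [ENNReal.toReal_ofReal (gaussianPDFReal_nonneg _ _ _),
      ENNReal.toReal_ofReal (gaussianPDFReal_nonneg _ _ _)]
    rw [← div_eq_inv_mul, Real.log_div (gaussianPDFReal_pos _ _ _ hv).ne'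
      (gaussianPDFReal_pos _ _ _ hu).ne']
  exact hac.ae_eq h3

lemma llr_pointwise {μ σ ω : ℝ} (hσ : 0 < σ) (hω : 0 < ω) (x : ℝ)
    {v u : ℝ≥0} (hvr : (v:ℝ) = σ^2) (hur : (u:ℝ) = ω⁻¹) :
    Real.log (gaussianPDFReal μ v x) - Real.log (gaussianPDFReal 0 u x)
      = (-(1/2)*Real.log ω - (1/2)*Real.log (σ^2) + ω*μ^2/2)
        + ((ω/2 - (2*σ^2)⁻¹)*(x-μ)^2 + (ω*μ)*(x-μ)) := by
  have hσ2 : (0:ℝ) < σ^2 := by positivity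
  rw [gaussianPDFReal, gaussianPDFReal, hvr, hur,
    Real.log_mul (by positivity) (Real.exp_ne_zero _),
    Real.log_mul (by positivity) (Real.exp_ne_zero _),
    Real.log_exp, Real.log_exp, Real.log_inv, Real.log_inv,
    Real.log_sqrt (by positivity), Real.log_sqrt (by positivity),
    Real.log_mul (by positivity) hσ2.ne',
    Real.log_mul (by positivity) (by positivity : ω⁻¹ ≠ 0),
    Real.log_inv]
  field_simp
  ring

lemma gaussKL_eq {μ σ ω : ℝ} (hσ : 0 < σ) (hω : 0 < ω) :
    gaussKL μ σ ω = (1/2) * (ω*(μ^2+σ^2) - Real.log (σ^2) - 1 - Real.log ω) := by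
  set v := Real.toNNReal (σ ^ 2) with hv_def
  set u := Real.toNNReal ω⁻¹ with hu_def
  have hσ2 : (0:ℝ) < σ^2 := by positivity
  have hvr : (v:ℝ) = σ^2 := Real.coe_toNNReal _ hσ2.le
  have hur : (u:ℝ) = ω⁻¹ := Real.coe_toNNReal _ (by positivity)
  have hv : v ≠ 0 := by simp only [hv_def, ne_eq, Real.toNNReal_eq_zero, not_le]; positivity
  have hu : u ≠ 0 := by simp only [hu_def, ne_eq, Real.toNNReal_eq_zero, not_le]; positivity
  have hvpos : 0 < (v:ℝ) := by rw [hvr]; exact hσ2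
  set A : ℝ := -(1/2)*Real.log ω - (1/2)*Real.log (σ^2) + ω*μ^2/2 with hA
  set B : ℝ := ω/2 - (2*σ^2)⁻¹ with hB
  set C : ℝ := ω*μ with hC
  set F : ℝ → ℝ := fun x => A + (B*(x-μ)^2 + C*(x-μ)) with hF
  have hae : llr (gaussianReal μ v) (gaussianReal 0 u) =ᵐ[gaussianReal μ v] F := by
    refine (llr_gauss_ae hσ hω).trans (ae_of_all _ fun x => ?_)
    exact llr_pointwise hσ hω x hvr hur
  have hIntSq := integrable_sq_gauss μ hvpos
  have hIntLin := integrable_lin_gauss μ hvpos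
  have h1 : Integrable (fun x => B*(x-μ)^2 + C*(x-μ)) (gaussianReal μ v) :=
    (hIntSq.const_mul B).add (hIntLin.const_mul C)
  have hIntF : Integrable F (gaussianReal μ v) := (integrable_const A).add h1
  have hIntLLR : Integrable (llr (gaussianReal μ v) (gaussianReal 0 u)) (gaussianReal μ v) :=
    hIntF.congr hae.symm
  have hac : gaussianReal μ v ≪ gaussianReal 0 u :=
    (gaussianReal_absolutelyContinuous μ hv).trans (gaussianReal_absolutelyContinuous' 0 hu)
  have hIntegral : ∫ x, llr (gaussianReal μ v) (gaussianReal 0 u) x ∂gaussianReal μ v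
      = A + B * σ^2 := by
    rw [integral_congr_ae hae, hF]
    rw [integral_add (integrable_const A) h1,
      integral_add (hIntSq.const_mul B) (hIntLin.const_mul C),
      integral_const_mul, integral_const_mul, integral_sq_gauss μ hvpos,
      integral_lin_gauss μ hvpos, integral_const, probReal_univ, hvr]
    simp
  have hR : A + B * σ^2 = (1/2) * (ω*(μ^2+σ^2) - Real.log (σ^2) - 1 - Real.log ω) := by
    rw [hA, hB]
    field_simp
    ring
  have hR0 : 0 ≤ A + B * σ^2 := by
    rw [hR]
    have hlog : Real.log (ω*σ^2) ≤ ω*σ^2 - 1 :=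
      Real.log_le_sub_one_of_pos (by positivity)
    rw [Real.log_mul hω.ne' hσ2.ne'] at hlog
    nlinarith [mul_nonneg hω.le (sq_nonneg μ)]
  rw [gaussKL, klDiv, if_pos ⟨hac, hIntLLR⟩, hIntegral, ENNReal.toReal_ofReal hR0, hR]


lemma gamma_ae_pos {a r : ℝ} (ha : 0 < a) (hr : 0 < r) :
    ∀ᵐ x ∂gammaMeasure a r, 0 < x := by
  rw [ae_iff]
  have hs : {x : ℝ | ¬ 0 < x} = Iic 0 := by ext x; simp
  rw [hs, gammaMeasure, withDensity_apply _ measurableSet_Iic]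
  have h0 : ∀ᵐ x ∂(volume.restrict (Iic (0:ℝ))), gammaPDF a r x = 0 := by
    have h1 : ∀ᵐ x ∂(volume.restrict (Iic (0:ℝ))), x < 0 := by
      refine (ae_restrict_iff' measurableSet_Iic).2 ?_
      have : (volume : Measure ℝ) {(0:ℝ)} = 0 := measure_singleton 0
      rw [ae_iff]
      refine measure_mono_null (fun x hx => ?_) this
      simp only [mem_setOf_eq, not_forall] at hx
      obtain ⟨h1, h2⟩ := hx
      simp only [mem_singleton_iff]
      linarith [mem_Iic.mp h1]
    filter_upwards [h1] with x hx
    exact gammaPDF_of_neg hx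
  rw [lintegral_congr_ae h0]
  simp

lemma integral_gammaMeasure_eq {a r : ℝ} (ha : 0 < a) (hr : 0 < r) (f : ℝ → ℝ) :
    ∫ x, f x ∂gammaMeasure a r = ∫ x, gammaPDFReal a r x * f x := by
  rw [gammaMeasure]
  have hd : gammaPDF a r = fun x => ((gammaPDFReal a r x).toNNReal : ℝ≥0∞) := rfl
  rw [hd, integral_withDensity_eq_integral_smul
    ((measurable_gammaPDFReal a r).real_toNNReal) f]
  congr 1
  ext x
  rw [NNReal.smul_def, smul_eq_mul, Real.coe_toNNReal _ (gammaPDFReal_nonneg ha hr x)]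

lemma integrable_gammaMeasure_iff {a r : ℝ} (ha : 0 < a) (hr : 0 < r) (f : ℝ → ℝ) :
    Integrable f (gammaMeasure a r) ↔
      Integrable (fun x => f x * gammaPDFReal a r x) volume := by
  rw [gammaMeasure]
  have hd : gammaPDF a r = fun x => ENNReal.ofReal (gammaPDFReal a r x) := rfl
  rw [hd,
    integrable_withDensity_iff ((measurable_gammaPDFReal a r).ennreal_ofReal)
      (ae_of_all _ fun x => ENNReal.ofReal_lt_top)]
  constructor <;> intro h <;> refine h.congr (ae_of_all _ fun x => ?_) <;>
    simp [gammaPDF, ENNReal.toReal_ofReal (gammaPDFReal_nonneg ha hr x)]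

lemma ae_eq_indicator_Ioi {a r : ℝ} (f : ℝ → ℝ) :
    (fun x => f x * gammaPDFReal a r x)
      =ᵐ[volume] (Ioi (0:ℝ)).indicator (fun x => f x * gammaPDFReal a r x) := by
  have h0 : (volume : Measure ℝ) {(0:ℝ)} = 0 := measure_singleton 0
  rw [Filter.EventuallyEq, ae_iff]
  refine measure_mono_null (fun x hx => ?_) h0
  simp only [mem_setOf_eq] at hx
  simp only [mem_singleton_iff]
  by_contra hne
  rcases lt_trichotomy x 0 with hlt | heq | hgt
  · apply hx
    rw [indicator_of_notMem (by simp [not_lt.mpr hlt.le] : x ∉ Ioi (0:ℝ))]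
    rw [gammaPDFReal, if_neg (not_le.mpr hlt), mul_zero]
  · exact hne heq
  · exact hx (by rw [indicator_of_mem (mem_Ioi.mpr hgt)])

lemma integrableOn_rpow_exp {s r : ℝ} (hs : -1 < s) (hr : 0 < r) :
    IntegrableOn (fun x : ℝ => x ^ s * rexp (-(r * x))) (Ioi 0) := by
  have := integrableOn_rpow_mul_exp_neg_mul_rpow hs zero_lt_one hr
  refine this.congr_fun (fun x hx => ?_) measurableSet_Ioi
  beta_reduce
  rw [Real.rpow_one, neg_mul]

lemma gammaPDFReal_mul_self {a r : ℝ} (hr : 0 < r) {x : ℝ} (hx : 0 < x) :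
    gammaPDFReal a r x * x = r ^ a / Real.Gamma a * (x ^ (a + 1 - 1) * rexp (-(r * x))) := by
  rw [gammaPDFReal, if_pos hx.le, show a + 1 - 1 = (a - 1) + 1 by ring,
    Real.rpow_add_one hx.ne']
  ring

lemma integrable_id_gamma {a r : ℝ} (ha : 0 < a) (hr : 0 < r) :
    Integrable (fun x => x) (gammaMeasure a r) := by
  rw [integrable_gammaMeasure_iff ha hr]
  rw [integrable_congr (ae_eq_indicator_Ioi (fun x : ℝ => x)),
    integrable_indicator_iff measurableSet_Ioi]
  have hbase : IntegrableOn (fun x : ℝ => r ^ a / Real.Gamma a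
      * (x ^ (a + 1 - 1) * rexp (-(r * x)))) (Ioi 0) :=
    (integrableOn_rpow_exp (by linarith) hr).const_mul _
  refine hbase.congr_fun (fun x hx => ?_) measurableSet_Ioi
  beta_reduce
  rw [← gammaPDFReal_mul_self hr hx]
  ring

lemma integral_id_gamma {a r : ℝ} (ha : 0 < a) (hr : 0 < r) :
    ∫ x, x ∂gammaMeasure a r = a / r := by
  rw [integral_gammaMeasure_eq ha hr]
  have h1 : (fun x : ℝ => gammaPDFReal a r x * x)
      =ᵐ[volume] (Ioi (0:ℝ)).indicator (fun x => gammaPDFReal a r x * x) := by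
    have := ae_eq_indicator_Ioi (a := a) (r := r) (fun x : ℝ => x)
    refine (Filter.EventuallyEq.trans (ae_of_all _ fun x => (mul_comm _ _)) this).trans ?_
    refine ae_of_all _ fun x => ?_
    by_cases hx : x ∈ Ioi (0:ℝ) <;>
      simp [indicator_apply, hx, mul_comm]
  rw [integral_congr_ae h1, integral_indicator measurableSet_Ioi,
    setIntegral_congr_fun measurableSet_Ioi
      (fun x hx => gammaPDFReal_mul_self hr (mem_Ioi.mp hx)),
    integral_const_mul, integral_rpow_mul_exp_neg_mul_Ioi (by linarith) hr,
    Real.Gamma_add_one ha.ne']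
  have key : r ^ a * (1/r) ^ a = 1 := by
    rw [← Real.mul_rpow hr.le (by positivity), mul_one_div_cancel hr.ne', Real.one_rpow]
  have hΓ : Real.Gamma a ≠ 0 := (Real.Gamma_pos_of_pos ha).ne'
  rw [Real.rpow_add (by positivity) a 1, Real.rpow_one]
  field_simp
  linear_combination key

lemma abs_log_le {a x : ℝ} (ha : 0 < a) (hx : 0 < x) :
    |Real.log x| ≤ (2/a) * (x ^ (a/2) + x ^ (-(a/2))) := by
  have hp1 : (0:ℝ) < x ^ (a/2) := Real.rpow_pos_of_pos hx _
  have hp2 : (0:ℝ) < x ^ (-(a/2)) := Real.rpow_pos_of_pos hx _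
  rcases le_total 1 x with hx1 | hx1
  · rw [abs_of_nonneg (Real.log_nonneg hx1)]
    have h1 : Real.log (x ^ (a/2)) ≤ x ^ (a/2) - 1 :=
      Real.log_le_sub_one_of_pos hp1
    rw [Real.log_rpow hx] at h1
    have h2 : Real.log x = (2/a) * (a/2 * Real.log x) := by field_simp
    rw [h2]
    have : a/2 * Real.log x ≤ x ^ (a/2) + x ^ (-(a/2)) := by linarith
    exact mul_le_mul_of_nonneg_left this (by positivity)
  · rw [abs_of_nonpos (Real.log_nonpos hx.le hx1)]
    have h1 : Real.log (x ^ (-(a/2))) ≤ x ^ (-(a/2)) - 1 :=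
      Real.log_le_sub_one_of_pos hp2
    rw [Real.log_rpow hx] at h1
    have h2 : -Real.log x = (2/a) * (-(a/2) * Real.log x) := by field_simp
    rw [h2]
    have : -(a/2) * Real.log x ≤ x ^ (a/2) + x ^ (-(a/2)) := by linarith
    exact mul_le_mul_of_nonneg_left this (by positivity)

lemma integrable_log_gamma {a r : ℝ} (ha : 0 < a) (hr : 0 < r) :
    Integrable Real.log (gammaMeasure a r) := by
  rw [integrable_gammaMeasure_iff ha hr]
  rw [integrable_congr (ae_eq_indicator_Ioi Real.log),
    integrable_indicator_iff measurableSet_Ioi]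
  set C : ℝ := (2/a) * (r ^ a / Real.Gamma a) with hC
  have hC0 : 0 ≤ C := by
    have := (Real.Gamma_pos_of_pos ha)
    positivity
  have hbound : IntegrableOn (fun x : ℝ =>
      C * (x ^ (a/2 + (a-1)) * rexp (-(r * x)) + x ^ (-(a/2) + (a-1)) * rexp (-(r * x))))
      (Ioi 0) := by
    refine (Integrable.add ?_ ?_).const_mul _
    · exact integrableOn_rpow_exp (by linarith) hr
    · exact integrableOn_rpow_exp (by linarith) hr
  refine Integrable.mono' hbound ?_ ?_
  · exact ((Real.measurable_log.mul (measurable_gammaPDFReal a r)).aestronglyMeasurable).restrict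
  · refine (ae_restrict_iff' measurableSet_Ioi).2 (ae_of_all _ fun x hx => ?_)
    have hx0 : 0 < x := mem_Ioi.mp hx
    have hpdf : gammaPDFReal a r x = r ^ a / Real.Gamma a * x ^ (a-1) * rexp (-(r*x)) := by
      rw [gammaPDFReal, if_pos hx0.le]
    rw [Real.norm_eq_abs, abs_mul, abs_of_nonneg (gammaPDFReal_nonneg ha hr x)]
    have h1 : |Real.log x| * gammaPDFReal a r x
        ≤ ((2/a) * (x ^ (a/2) + x ^ (-(a/2)))) * gammaPDFReal a r x :=
      mul_le_mul_of_nonneg_right (abs_log_le ha hx0) (gammaPDFReal_nonneg ha hr x)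
    refine h1.trans (le_of_eq ?_)
    rw [hpdf, Real.rpow_add hx0, Real.rpow_add hx0]
    ring

lemma integral_gaussKL_gamma {a r μ σ : ℝ} (ha : 0 < a) (hr : 0 < r) (hσ : 0 < σ) :
    ∫ ω, gaussKL μ σ ω ∂gammaMeasure a r
      = (1/2) * ((a/r) * (μ^2 + σ^2) - Real.log (σ^2) - 1
          - ∫ ω, Real.log ω ∂gammaMeasure a r) := by
  haveI := isProbabilityMeasure_gammaMeasure ha hr
  have hmean := integral_id_gamma ha hr
  have hIntId := integrable_id_gamma ha hr
  have hIntLog := integrable_log_gamma ha hr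
  have h1 : ∫ ω, gaussKL μ σ ω ∂gammaMeasure a r
      = ∫ ω, (((1/2)*(μ^2+σ^2)) * ω
          + ((-(1/2))*Real.log (σ^2) - 1/2 + (-(1/2)) * Real.log ω)) ∂gammaMeasure a r := by
    refine integral_congr_ae ?_
    filter_upwards [gamma_ae_pos ha hr] with ω hω
    rw [gaussKL_eq hσ hω]; ring
  rw [h1]
  have hf : Integrable (fun ω => ((1/2)*(μ^2+σ^2)) * ω) (gammaMeasure a r) :=
    hIntId.const_mul _
  have hg : Integrable (fun ω => (-(1/2))*Real.log (σ^2) - 1/2 + (-(1/2)) * Real.log ω)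
      (gammaMeasure a r) := (integrable_const _).add (hIntLog.const_mul _)
  rw [integral_add hf hg, integral_const_mul,
    integral_add (integrable_const _) (hIntLog.const_mul _), integral_const,
    integral_const_mul, hmean, probReal_univ]
  simp only [ENNReal.toReal_one, smul_eq_mul, one_mul]
  ring

/-- Closed form of the sparsity loss `ℓ_sparse` (Eq. 29 of the paper): with
`q(S) = ⊗_{ij} N(μ_{s,ij}, σ_{s,ij}²)`, `p(s_{ij}|ω_{ij}) = N(0, ω_{ij}⁻¹)` and
`q(Ω) = ⊗_{ij} Gamma(α_{ij}, β_{ij})`, the expected KL `E_{q(Ω)}[KL(q(S) ‖ p(S|Ω))]` equals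
`½ Σ_{ij} [ (α_{ij}/β_{ij})(μ_{s,ij}² + σ_{s,ij}²) − log σ_{s,ij}² − 1 − E_{ij}[log ω] ]`. -/
theorem expected_kl_sparse_closed_form {h w : ℕ} (α β : Fin h → Fin w → ℝ)
    (hα : ∀ i j, 0 < α i j) (hβ : ∀ i j, 0 < β i j)
    (μs σs : Fin h → Fin w → ℝ) (hσ : ∀ i j, 0 < σs i j) :
    (∑ i, ∑ j, ∫ ω, gaussKL (μs i j) (σs i j) ω ∂gammaMeasure (α i j) (β i j)) =
      (1 / 2) * ∑ i, ∑ j,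
        ((α i j / β i j) * (μs i j ^ 2 + σs i j ^ 2) - Real.log (σs i j ^ 2) - 1
          - ∫ ω, Real.log ω ∂gammaMeasure (α i j) (β i j)) := by
  rw [Finset.mul_sum]
  refine Finset.sum_congr rfl fun i _ => ?_
  rw [Finset.mul_sum]
  refine Finset.sum_congr rfl fun j _ => ?_
  exact integral_gaussKL_gamma (hα i j) (hβ i j) (hσ i j)
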